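/- arXiv:math/0511485 — 3 statements merged into one kernel-verified Lean document; each statement's English description precedes it below -/
import Mathlib

section
/- (Proposition: p-adic valuation versus point counts over finite fields.) Let p be a prime number, ν ≥ 1 an integer, and z ∈ ℤ. Let W̄ denote the reduction modulo p of the Laurent polynomial W, a Laurent polynomial over 𝔽_{p^ν}, and set M = #{ξ ∈ ((𝔽_{p^ν})^×)^n : W̄(ξ) = z̄ in 𝔽_{p^ν}}, where z̄ is the image of z in 𝔽_{p^ν}. Then p^M divides the integer B_{p^ν−1}(z) in ℤ. -/
open scoped BigOperators

/-- The evaluation of the Laurent polynomial `W(u) = ∑_{e,f ∈ E} c_e c_f u^{e-f}`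
at a point `ζ` of the complex torus. -/
noncomputable def Weval {n : ℕ} (E : Finset (Fin n → ℤ)) (c : (Fin n → ℤ) → ℕ)
    (ζ : Fin n → ℂ) : ℂ :=
  ∑ e ∈ E, ∑ f ∈ E, ((c e : ℂ) * (c f : ℂ)) * ∏ j, ζ j ^ (e j - f j)

/-- The finite subgroup `(μ_N)^n` of the complex torus, as a `Finset`. -/
noncomputable def torus (n N : ℕ) : Finset (Fin n → ℂ) :=
  Fintype.piFinset fun _ => Polynomial.nthRootsFinset N (1 : ℂ)

/-- The evaluation of (the reduction of) the Laurent polynomial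
`W(u) = ∑_{e,f ∈ E} c_e c_f u^{e-f}` at an `n`-tuple of units of a commutative ring `K`. -/
def WevalUnits {n : ℕ} (E : Finset (Fin n → ℤ)) (c : (Fin n → ℤ) → ℕ)
    {K : Type*} [CommRing K] (ξ : Fin n → Kˣ) : K :=
  ∑ e ∈ E, ∑ f ∈ E, ((c e * c f : ℕ) : K) * ∏ j, ((ξ j ^ (e j - f j) : Kˣ) : K)

/- ### Auxiliary lemmas -/

lemma zpow_emod_toNat {G : Type*} [Group G] {u : G} {N : ℕ} (hN : N ≠ 0) (hu : u ^ N = 1)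
    (a : ℤ) : u ^ a = u ^ (a % (N : ℤ)).toNat := by
  have hN' : (0 : ℤ) < N := by exact_mod_cast Nat.pos_of_ne_zero hN
  have h0 : 0 ≤ a % (N : ℤ) := Int.emod_nonneg a hN'.ne'
  calc u ^ a = u ^ ((N : ℤ) * (a / (N : ℤ)) + a % (N : ℤ)) := by rw [Int.mul_ediv_add_emod]
    _ = (u ^ (N : ℤ)) ^ (a / (N : ℤ)) * u ^ (a % (N : ℤ)) := by rw [zpow_add, zpow_mul]
    _ = u ^ (a % (N : ℤ)) := by rw [zpow_natCast, hu, one_zpow, one_mul]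
    _ = u ^ (a % (N : ℤ)).toNat := by rw [← zpow_natCast, Int.toNat_of_nonneg h0]

lemma map_WevalUnits {n : ℕ} (E : Finset (Fin n → ℤ)) (c : (Fin n → ℤ) → ℕ)
    {R S : Type*} [CommRing R] [CommRing S] (r : R →+* S) (ξ : Fin n → Rˣ) :
    r (WevalUnits E c ξ) = WevalUnits E c (fun j => Units.map (r : R →* S) (ξ j)) := by
  unfold WevalUnits
  rw [map_sum]
  refine Finset.sum_congr rfl fun e _ => ?_
  rw [map_sum]
  refine Finset.sum_congr rfl fun f _ => ?_
  rw [map_mul, map_natCast, map_prod]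
  congr 1
  refine Finset.prod_congr rfl fun j _ => ?_
  rw [← map_zpow (Units.map (r : R →* S)) (ξ j) (e j - f j), Units.coe_map]
  simp

/-- The universal integer polynomial whose evaluation at any `N`-th root of unity `u`
of a commutative ring computes `∏_v (z - W(u^v))`. -/
noncomputable def GG {n : ℕ} (E : Finset (Fin n → ℤ)) (c : (Fin n → ℤ) → ℕ) (z : ℤ)
    (N : ℕ) [NeZero N] : Polynomial ℤ :=
  ∏ v : Fin n → ZMod N, (Polynomial.C z - ∑ e ∈ E, ∑ f ∈ E,
    Polynomial.C ((c e * c f : ℕ) : ℤ) *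
      ∏ j, Polynomial.X ^ ((((v j).val : ℤ) * (e j - f j)) % (N : ℤ)).toNat)

lemma aeval_GG {n : ℕ} (E : Finset (Fin n → ℤ)) (c : (Fin n → ℤ) → ℕ) (z : ℤ)
    (N : ℕ) [NeZero N] {R : Type*} [CommRing R] (u : Rˣ) (hu : u ^ N = 1) :
    Polynomial.aeval (u : R) (GG E c z N) =
      ∏ v : Fin n → ZMod N, ((z : R) - WevalUnits E c fun j => u ^ (v j).val) := by
  have key : ∀ (k : ℕ) (m : ℤ),
      (u : R) ^ (((k : ℤ) * m) % (N : ℤ)).toNat = (((u ^ k) ^ m : Rˣ) : R) := by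
    intro k m
    have h1 : (u ^ k) ^ m = u ^ (((k : ℤ) * m) % (N : ℤ)).toNat := by
      rw [← zpow_natCast u k, ← zpow_mul, zpow_emod_toNat (NeZero.ne N) hu]
    rw [h1, Units.val_pow_eq_pow_val]
  unfold GG WevalUnits
  rw [map_prod]
  refine Finset.prod_congr rfl fun v _ => ?_
  rw [map_sub, Polynomial.aeval_C,
    show (algebraMap ℤ R) z = (z : R) from eq_intCast _ z, map_sum]
  congr 1
  refine Finset.sum_congr rfl fun e _ => ?_
  rw [map_sum]
  refine Finset.sum_congr rfl fun f _ => ?_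
  rw [map_mul, Polynomial.aeval_C,
    show (algebraMap ℤ R) ((c e * c f : ℕ) : ℤ) = ((c e * c f : ℕ) : R) by
      rw [eq_intCast]; push_cast; ring, map_prod]
  congr 1
  refine Finset.prod_congr rfl fun j _ => ?_
  rw [map_pow, Polynomial.aeval_X]
  exact key _ _

lemma p_dvd_of_coeff_zero {p : ℕ} [Fact p.Prime] {K : Type*} [Field K] [CharP K p]
    [PerfectRing K p] (x : WittVector p K) (hx : x.coeff 0 = 0) :
    (p : WittVector p K) ∣ x := by
  rcases eq_or_ne x 0 with rfl | hx0
  · exact dvd_zero _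
  obtain ⟨m, y, hy0, rfl⟩ := WittVector.exists_eq_pow_p_mul x hx0
  have hc : (p : K) ^ m * y.coeff 0 = 0 := by
    have h1 : ((p : WittVector p K) ^ m * y).coeff 0 =
        WittVector.constantCoeff ((p : WittVector p K) ^ m * y) := by
      rw [WittVector.constantCoeff_apply]
    rw [h1, map_mul, map_pow, map_natCast, WittVector.constantCoeff_apply] at hx
    exact hx
  cases m with
  | zero =>
    rw [pow_zero, one_mul] at hc
    exact absurd hc hy0
  | succ m =>
    exact dvd_mul_of_dvd_left (dvd_pow_self _ (Nat.succ_ne_zero m)) y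

lemma int_descent {p : ℕ} [Fact p.Prime] {K : Type*} [Field K] [CharP K p]
    [PerfectRing K p] :
    ∀ (M : ℕ) (b : ℤ), (p : WittVector p K) ^ M ∣ (b : WittVector p K) → (p : ℤ) ^ M ∣ b := by
  intro M
  induction M with
  | zero => intro b _; simp
  | succ M ih =>
    intro b h
    have hp1 : (p : WittVector p K) ∣ (b : WittVector p K) :=
      dvd_trans (dvd_pow_self _ (Nat.succ_ne_zero M)) h
    have hbK : ((b : ℤ) : K) = 0 := by
      obtain ⟨y, hy⟩ := hp1
      have h2 := congrArg (WittVector.constantCoeff) hy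
      rw [map_intCast, map_mul, map_natCast] at h2
      rw [h2, CharP.cast_eq_zero K p, zero_mul]
    obtain ⟨b₀, rfl⟩ := (CharP.intCast_eq_zero_iff K p b).mp hbK
    have h0 : (p : WittVector p K) ≠ 0 := (WittVector.irreducible p).ne_zero
    have h2 : (p : WittVector p K) ^ M ∣ (b₀ : WittVector p K) := by
      have h3 : (((p : ℤ) * b₀ : ℤ) : WittVector p K)
          = (p : WittVector p K) * (b₀ : WittVector p K) := by push_cast; ring
      rw [h3, pow_succ'] at h
      exact (mul_dvd_mul_iff_left h0).mp h
    rw [pow_succ']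
    exact mul_dvd_mul dvd_rfl (ih b₀ h2)

/-- p-adic valuation versus point counts over finite fields: `p^M` divides the integer
`B_{p^ν - 1}(z)`, where `M` is the number of points `ξ ∈ ((𝔽_{p^ν})^×)^n` with `W̄(ξ) = z̄`. -/
theorem pow_card_solutions_dvd_BN
    (n : ℕ) (hn : 1 ≤ n) (E : Finset (Fin n → ℤ)) (c : (Fin n → ℤ) → ℕ)
    (hc : ∀ e ∈ E, 0 < c e)
    (hgen : AddSubgroup.closure {v : Fin n → ℤ | ∃ e ∈ E, ∃ f ∈ E, v = e - f} = ⊤)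
    (p : ℕ) [Fact p.Prime] (ν : ℕ) (hν : 1 ≤ ν) (z : ℤ)
    (M : ℕ)
    (hM : M = Nat.card {ξ : Fin n → (GaloisField p ν)ˣ //
      WevalUnits E c ξ = (z : GaloisField p ν)})
    (b : ℤ) (hb : (b : ℂ) = ∏ ζ ∈ torus n (p ^ ν - 1), ((z : ℂ) - Weval E c ζ)) :
    (p : ℤ) ^ M ∣ b := by
  classical
  have hp : p.Prime := Fact.out
  set N : ℕ := p ^ ν - 1 with hNdef
  have hq2 : 2 ≤ p ^ ν := by
    calc 2 ≤ p := hp.two_le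
    _ = p ^ 1 := (pow_one p).symm
    _ ≤ p ^ ν := Nat.pow_le_pow_right (Nat.le_of_lt hp.one_lt) hν
  have hN : 0 < N := by omega
  haveI : NeZero N := ⟨hN.ne'⟩
  have hpN : ¬ (p ∣ N) := by
    intro hdvd
    have h1 : p ∣ p ^ ν := dvd_pow_self p (by omega)
    have h2 : p ∣ 1 := by
      have : p ^ ν - N = 1 := by omega
      exact this ▸ Nat.dvd_sub h1 hdvd
    exact hp.one_lt.ne' (Nat.eq_one_of_dvd_one h2 ▸ rfl)
  -- ### Complex side
  set ω0 : ℂ := Complex.exp (2 * Real.pi * Complex.I / N) with hω0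
  have hω : IsPrimitiveRoot ω0 N := Complex.isPrimitiveRoot_exp N hN.ne'
  set ωu : ℂˣ := (hω.isUnit hN.ne').unit with hωu
  have hωu_spec : (ωu : ℂ) = ω0 := (hω.isUnit hN.ne').unit_spec
  have hωuN : ωu ^ N = 1 := by
    ext
    rw [Units.val_pow_eq_pow_val, hωu_spec, Units.val_one, hω.pow_eq_one]
  have hWe : ∀ k : Fin n → ℕ,
      WevalUnits E c (fun j => ωu ^ k j) = Weval E c (fun j => ω0 ^ k j) := by
    intro k
    unfold WevalUnits Weval
    refine Finset.sum_congr rfl fun e _ => Finset.sum_congr rfl fun f _ => ?_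
    congr 1
    · push_cast; ring
    · refine Finset.prod_congr rfl fun j _ => ?_
      rw [Units.val_zpow_eq_zpow_val, Units.val_pow_eq_pow_val, hωu_spec]
  have hprodC : ∏ v : Fin n → ZMod N, ((z : ℂ) - WevalUnits E c fun j => ωu ^ (v j).val)
      = ∏ ζ ∈ torus n N, ((z : ℂ) - Weval E c ζ) := by
    refine Finset.prod_bij (fun v _ => fun j => ω0 ^ (v j).val) ?_ ?_ ?_ ?_
    · intro v _
      refine Fintype.mem_piFinset.mpr fun j => (Polynomial.mem_nthRootsFinset hN 1).mpr ?_
      rw [← pow_mul, mul_comm, pow_mul, hω.pow_eq_one, one_pow]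
    · intro v _ w _ h
      funext j
      exact ZMod.val_injective N
        (hω.pow_inj (ZMod.val_lt _) (ZMod.val_lt _) (congrFun h j))
    · intro ζ hζ
      have hz : ∀ j, ∃ i, i < N ∧ ω0 ^ i = ζ j := by
        intro j
        obtain ⟨i, hi, hie⟩ := hω.eq_pow_of_pow_eq_one
          ((Polynomial.mem_nthRootsFinset hN 1).mp (Fintype.mem_piFinset.mp hζ j))
        exact ⟨i, hi, hie⟩
      choose i hi hie using hz
      refine ⟨fun j => (i j : ZMod N), Finset.mem_univ _, funext fun j => ?_⟩
      show ω0 ^ ((i j : ZMod N)).val = ζ j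
      rw [ZMod.val_cast_of_lt (hi j), hie j]
    · intro v _
      rw [hWe]
  have haevalC : Polynomial.aeval ω0 (GG E c z N) = (b : ℂ) := by
    rw [← hωu_spec, aeval_GG E c z N ωu hωuN, hprodC, hb]
  -- divisibility of `GG - C b` by the cyclotomic polynomial
  have hdvdGG : Polynomial.cyclotomic N ℤ ∣ GG E c z N - Polynomial.C b := by
    rw [Polynomial.cyclotomic_eq_minpoly hω hN]
    refine minpoly.isIntegrallyClosed_dvd (hω.isIntegral hN) ?_
    rw [map_sub, Polynomial.aeval_C, haevalC, eq_intCast, sub_self]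
  -- ### Finite field / Witt vector side
  set K := GaloisField p ν with hK
  haveI : ExpChar K p := ExpChar.prime hp
  obtain ⟨gu, hgu⟩ := IsCyclic.exists_generator (α := Kˣ)
  have horder : orderOf gu = N := by
    rw [orderOf_eq_card_of_forall_mem_zpowers hgu, Nat.card_units,
      GaloisField.card p ν (by omega)]
  have hgprim : IsPrimitiveRoot gu N := horder ▸ IsPrimitiveRoot.orderOf gu
  have hguN : gu ^ N = 1 := horder ▸ pow_orderOf_eq_one gu
  set O := WittVector p K with hO
  set A : O := WittVector.teichmuller p ((gu : K)) with hA
  have hA0 : A.coeff 0 = ((gu : K)) := WittVector.teichmuller_coeff_zero p ((gu : K))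
  set tu : Oˣ := WittVector.mkUnit hA0 with htu
  have htu_spec : (tu : O) = A := WittVector.coe_mkUnit hA0
  have htuN : tu ^ N = 1 := by
    ext
    rw [Units.val_pow_eq_pow_val, htu_spec, Units.val_one, hA, ← map_pow,
      ← Units.val_pow_eq_pow_val, hguN, Units.val_one, map_one]
  set r : O →+* K := WittVector.constantCoeff with hr
  have hrt : r (tu : O) = (gu : K) := by
    rw [htu_spec, hr, WittVector.constantCoeff_apply, hA0]
  have hmapt : Units.map (r : O →* K) tu = gu := by
    ext
    rw [Units.coe_map]
    exact hrt
  -- the Teichmüller lift is a root of the `N`-th cyclotomic polynomial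
  have hcyc : Polynomial.aeval ((tu : O)) (Polynomial.cyclotomic N ℤ) = 0 := by
    have hprodc : ∏ d ∈ N.divisors, Polynomial.aeval ((tu : O)) (Polynomial.cyclotomic d ℤ)
        = 0 := by
      rw [← map_prod, Polynomial.prod_cyclotomic_eq_X_pow_sub_one hN ℤ, map_sub, map_pow,
        Polynomial.aeval_X, map_one, ← Units.val_pow_eq_pow_val, htuN, Units.val_one, sub_self]
    obtain ⟨d, hd, hd0⟩ := Finset.prod_eq_zero_iff.mp hprodc
    have hdN : d ∣ N := (Nat.mem_divisors.mp hd).1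
    haveI : NeZero ((d : K)) := ⟨by
      rw [Ne, CharP.cast_eq_zero_iff K p d]
      exact fun hpd => hpN (hpd.trans hdN)⟩
    have hroot : Polynomial.IsRoot (Polynomial.cyclotomic d K) ((gu : K)) := by
      have h1 : Polynomial.aeval (r ((tu : O))) (Polynomial.cyclotomic d ℤ) = 0 := by
        have h2 := Polynomial.aeval_algHom_apply r.toIntAlgHom ((tu : O))
          (Polynomial.cyclotomic d ℤ)
        rw [hd0, map_zero] at h2
        exact h2
      rw [hrt] at h1
      rwa [Polynomial.aeval_def, ← Polynomial.eval_map, algebraMap_int_eq,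
        Polynomial.map_cyclotomic_int, ← Polynomial.IsRoot.def] at h1
    have hgKd : IsPrimitiveRoot ((gu : K)) d := Polynomial.isRoot_cyclotomic_iff.mp hroot
    have hgKN : IsPrimitiveRoot ((gu : K)) N := IsPrimitiveRoot.coe_units_iff.mpr hgprim
    have hdN' : d = N := hgKd.unique hgKN
    rwa [hdN'] at hd0
  -- evaluation of `GG` at the Teichmüller lift equals `b`
  have hGb : Polynomial.aeval ((tu : O)) (GG E c z N) = ((b : O)) := by
    obtain ⟨h, hh⟩ := hdvdGG
    have h1 := congrArg (Polynomial.aeval ((tu : O))) hh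
    rw [map_sub, map_mul, hcyc, zero_mul, Polynomial.aeval_C, eq_intCast] at h1
    linear_combination h1
  -- the solution-count as a filtered cardinality
  set S : Finset (Fin n → ZMod N) := Finset.univ.filter
    (fun v => WevalUnits E c (fun j => gu ^ (v j).val) = (z : K)) with hS
  -- `M = S.card`
  have hMS : M = S.card := by
    have hinj : Function.Injective (fun v : ZMod N => gu ^ v.val) := by
      intro v w h
      exact ZMod.val_injective N (hgprim.pow_inj (ZMod.val_lt v) (ZMod.val_lt w) h)
    have hsurj : Function.Surjective (fun v : ZMod N => gu ^ v.val) := by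
      intro x
      obtain ⟨m, hm⟩ := Subgroup.mem_zpowers_iff.mp (hgu x)
      have hnn : 0 ≤ m % (N : ℤ) := Int.emod_nonneg m (by exact_mod_cast hN.ne')
      have hlt' : m % (N : ℤ) < N := Int.emod_lt_of_pos m (by exact_mod_cast hN)
      have hlt : (m % (N : ℤ)).toNat < N := by omega
      refine ⟨((m % (N : ℤ)).toNat : ZMod N), ?_⟩
      show gu ^ (((m % (N : ℤ)).toNat : ZMod N)).val = x
      rw [ZMod.val_cast_of_lt hlt, ← zpow_emod_toNat hN.ne' hguN m, hm]
    let e : ZMod N ≃ Kˣ := Equiv.ofBijective (fun v => gu ^ v.val) ⟨hinj, hsurj⟩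
    have heapp : ∀ v : ZMod N, e v = gu ^ v.val := fun _ => rfl
    have hEquiv : {v : Fin n → ZMod N //
        WevalUnits E c (fun j => gu ^ (v j).val) = (z : K)} ≃
        {ξ : Fin n → Kˣ // WevalUnits E c ξ = (z : K)} := by
      refine Equiv.subtypeEquiv (Equiv.piCongrRight fun _ => e) fun v => ?_
      have : ((Equiv.piCongrRight fun _ => e) v) = fun j => gu ^ (v j).val := by
        funext j
        rw [Equiv.piCongrRight_apply, Pi.map_apply, heapp]
      rw [this]
    rw [hM, ← Nat.card_congr hEquiv, Nat.card_eq_fintype_card, Fintype.card_subtype, hS]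
  -- each solution contributes a factor of `p`
  have hdvdO : (p : O) ^ S.card ∣ ((b : O)) := by
    rw [← hGb, aeval_GG E c z N tu htuN]
    calc (p : O) ^ S.card = ∏ _v ∈ S, (p : O) := by rw [Finset.prod_const]
      _ ∣ ∏ v ∈ S, ((z : O) - WevalUnits E c fun j => tu ^ (v j).val) := by
          refine Finset.prod_dvd_prod_of_dvd _ _ fun v hv => ?_
          refine p_dvd_of_coeff_zero _ ?_
          have hv' : WevalUnits E c (fun j => gu ^ (v j).val) = (z : K) :=
            (Finset.mem_filter.mp hv).2
          have h1 : r ((z : O) - WevalUnits E c fun j => tu ^ (v j).val) = 0 := by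
            rw [map_sub, map_intCast, map_WevalUnits]
            have h2 : (fun j => Units.map (r : O →* K) (tu ^ (v j).val))
                = fun j => gu ^ (v j).val := by
              funext j
              rw [map_pow, hmapt]
            rw [h2, hv', sub_self]
          rwa [hr, WittVector.constantCoeff_apply] at h1
      _ ∣ ∏ v : Fin n → ZMod N, ((z : O) - WevalUnits E c fun j => tu ^ (v j).val) :=
          Finset.prod_dvd_prod_of_subset _ _ _ (Finset.subset_univ S)
  rw [hMS]
  exact int_descent S.card b hdvdO
end

section
/- (Lemma: Gauss-type congruences for the moments.) For every prime number p and all integers k ≥ 0 and α ≥ 0, one has m_{k p^{α+1}} ≡ m_{k p^{α}} (mod p^{α+1}), where m_j ∈ ℤ denotes the constant term of the Laurent polynomial W^j. -/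
open scoped BigOperators

/-- The Laurent polynomial `W = ∑_{e,f ∈ E} c_e c_f u^{e-f}`, as an element of the group
algebra `ℤ[ℤ^n]` (the ring of Laurent polynomials in `n` variables over `ℤ`). -/
noncomputable def WL {n : ℕ} (E : Finset (Fin n → ℤ)) (c : (Fin n → ℤ) → ℕ) :
    AddMonoidAlgebra ℤ (Fin n → ℤ) :=
  ∑ e ∈ E, ∑ f ∈ E, AddMonoidAlgebra.single (e - f) ((c e : ℤ) * (c f : ℤ))

/-- The `k`-th moment `m_k`: the constant term of the Laurent polynomial `W^k`. -/
noncomputable def moment {n : ℕ} (E : Finset (Fin n → ℤ)) (c : (Fin n → ℤ) → ℕ)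
    (k : ℕ) : ℤ :=
  (WL E c ^ k).coeff 0

section Aux
variable {G : Type*} [AddCommMonoid G]

/-- multiplication-by-`p` on exponents, as an `AddMonoidHom`. -/
def nsmulHom (p : ℕ) : G →+ G where
  toFun := fun g => p • g
  map_zero' := smul_zero p
  map_add' := fun a b => smul_add p a b

@[simp] lemma nsmulHom_apply (p : ℕ) (g : G) : nsmulHom p g = p • g := rfl

/-- The dilation ring hom `ψ` on Laurent polynomials. -/
noncomputable def psiHom (p : ℕ) : AddMonoidAlgebra ℤ G →+* AddMonoidAlgebra ℤ G :=
  AddMonoidAlgebra.mapDomainRingHom ℤ (nsmulHom (G := G) p)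

lemma psiHom_single (p : ℕ) (a : G) (b : ℤ) :
    psiHom p (AddMonoidAlgebra.single a b) = AddMonoidAlgebra.single (p • a) b := by
  simp [psiHom, Finsupp.mapDomain_single]

lemma dvd_single (p : ℕ) (g : G) {t : ℤ} (h : (p : ℤ) ∣ t) :
    ((p : ℕ) : AddMonoidAlgebra ℤ G) ∣ AddMonoidAlgebra.single g t := by
  obtain ⟨s, rfl⟩ := h
  refine ⟨AddMonoidAlgebra.single g s, ?_⟩
  rw [AddMonoidAlgebra.natCast_def, AddMonoidAlgebra.single_mul_single, zero_add]

lemma fermat_int (p : ℕ) (hp : p.Prime) (b : ℤ) : (p : ℤ) ∣ b ^ p - b := by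
  haveI := Fact.mk hp
  have h : ((b ^ p - b : ℤ) : ZMod p) = 0 := by push_cast [ZMod.pow_card]; ring
  exact (ZMod.intCast_zmod_eq_zero_iff_dvd _ _).mp h

lemma frobenius_congr (p : ℕ) (hp : p.Prime) (x : AddMonoidAlgebra ℤ G) :
    ((p : ℕ) : AddMonoidAlgebra ℤ G) ∣ x ^ p - psiHom p x := by
  induction x using AddMonoidAlgebra.induction with
  | zero => simp [hp.pos.ne']
  | single_add a b f ha hb ih =>
    let F : AddMonoidAlgebra ℤ G := f
    show ((p : ℕ) : AddMonoidAlgebra ℤ G) ∣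
      (AddMonoidAlgebra.single a b + F) ^ p - psiHom p (AddMonoidAlgebra.single a b + F)
    obtain ⟨r, hr⟩ := exists_add_pow_prime_eq hp (AddMonoidAlgebra.single a b) F
    have key : (AddMonoidAlgebra.single a b + F) ^ p
          - psiHom p (AddMonoidAlgebra.single a b + F)
        = AddMonoidAlgebra.single (p • a) (b ^ p - b) + (F ^ p - psiHom p F) + ↑p * (AddMonoidAlgebra.single a b * F * r) := by
      rw [hr, AddMonoidAlgebra.single_pow, map_add, psiHom_single,
        show AddMonoidAlgebra.single (p • a) (b ^ p - b)
            = AddMonoidAlgebra.single (p • a) (b ^ p) - AddMonoidAlgebra.single (p • a) b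
          from AddMonoidAlgebra.single_sub _ _ _]
      ring
    rw [key]
    exact dvd_add (dvd_add (dvd_single p _ (fermat_int p hp b)) ih) ⟨AddMonoidAlgebra.single a b * F * r, rfl⟩

end Aux

/-- Gauss-type congruences for the moments: `m_{k p^{α+1}} ≡ m_{k p^α} (mod p^{α+1})`. -/
theorem moment_gauss_congruence
    (n : ℕ) (hn : 1 ≤ n) (E : Finset (Fin n → ℤ)) (c : (Fin n → ℤ) → ℕ)
    (hc : ∀ e ∈ E, 0 < c e)
    (hgen : AddSubgroup.closure {v : Fin n → ℤ | ∃ e ∈ E, ∃ f ∈ E, v = e - f} = ⊤)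
    (p : ℕ) (hp : p.Prime) (k α : ℕ) :
    (p : ℤ) ^ (α + 1) ∣
      moment E c (k * p ^ (α + 1)) - moment E c (k * p ^ α) := by
  set W : AddMonoidAlgebra ℤ (Fin n → ℤ) := WL E c with hW
  -- Frobenius congruence and its lift
  have h1 : ((p : ℕ) : AddMonoidAlgebra ℤ (Fin n → ℤ)) ∣ W ^ p - psiHom p W := frobenius_congr p hp W
  have h2 : ((p : ℕ) : AddMonoidAlgebra ℤ (Fin n → ℤ)) ∣ (W ^ p) ^ k - (psiHom p W) ^ k :=
    h1.trans (sub_dvd_pow_sub_pow _ _ k)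
  have h3 := dvd_sub_pow_of_dvd_sub h2 α
  have e1 : ((W ^ p) ^ k) ^ p ^ α = W ^ (k * p ^ (α + 1)) := by
    rw [← pow_mul, ← pow_mul]; ring_nf
  have e2 : ((psiHom p W) ^ k) ^ p ^ α = psiHom p (W ^ (k * p ^ α)) := by
    rw [← pow_mul, ← map_pow]
  rw [e1, e2] at h3
  -- extract the constant term
  have hcast : ((p : ℕ) : AddMonoidAlgebra ℤ (Fin n → ℤ)) ^ (α + 1)
      = AddMonoidAlgebra.single (0 : Fin n → ℤ) ((p : ℤ) ^ (α + 1)) := by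
    rw [AddMonoidAlgebra.natCast_def, AddMonoidAlgebra.single_pow, smul_zero]
  obtain ⟨y, hy⟩ := h3
  rw [hcast] at hy
  have hy0 : (W ^ (k * p ^ (α + 1))).coeff 0 - (psiHom p (W ^ (k * p ^ α))).coeff 0
      = (p : ℤ) ^ (α + 1) * y.coeff 0 := by
    have : (W ^ (k * p ^ (α + 1)) - psiHom p (W ^ (k * p ^ α))).coeff 0
        = (AddMonoidAlgebra.single (0 : Fin n → ℤ) ((p : ℤ) ^ (α + 1)) * y).coeff 0 := by rw [hy]
    rwa [AddMonoidAlgebra.coeff_sub, Finsupp.sub_apply, AddMonoidAlgebra.coeff_single_zero_mul] at this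
  -- constant term is preserved by ψ
  have hinj : Function.Injective (nsmulHom (G := Fin n → ℤ) p) := by
    intro v w h
    funext i
    have h' := congrFun (by exact_mod_cast h : p • v = p • w) i
    simp only [Pi.smul_apply, nsmul_eq_mul] at h'
    exact mul_left_cancel₀ (by exact_mod_cast hp.pos.ne' : ((p : ℕ) : ℤ) ≠ 0) h'
  have hpsi0 : (psiHom p (W ^ (k * p ^ α))).coeff 0 = (W ^ (k * p ^ α)).coeff 0 := by
    have := Finsupp.mapDomain_apply hinj (W ^ (k * p ^ α)).coeff (0 : Fin n → ℤ)
    simpa [psiHom, AddMonoidAlgebra.mapDomainRingHom, AddMonoidAlgebra.mapDomain] using this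
  refine ⟨y.coeff 0, ?_⟩
  calc moment E c (k * p ^ (α + 1)) - moment E c (k * p ^ α)
      = (W ^ (k * p ^ (α + 1))).coeff 0 - (psiHom p (W ^ (k * p ^ α))).coeff 0 := by
        rw [hpsi0]; rfl
    _ = (p : ℤ) ^ (α + 1) * y.coeff 0 := hy0
end

section
/- (Honeycomb example: the moments.) For every integer k ≥ 0, the constant term of the Laurent polynomial ((u_1 + u_2 + 1)(u_1^{−1} + u_2^{−1} + 1))^k ∈ ℤ[u_1^{±1}, u_2^{±1}] equals Σ_{j=0}^{k} binom(k, j)² · binom(2j, j). -/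
open scoped BigOperators

open Finset AddMonoidAlgebra

lemma hc_coeff_sum {ι} (s : Finset ι) (f : ι → AddMonoidAlgebra ℤ (Fin 2 → ℤ)) (g : Fin 2 → ℤ) :
    (∑ i ∈ s, f i).coeff g = ∑ i ∈ s, (f i).coeff g := by
  rw [coeff_sum]; exact Finset.sum_apply' g

lemma hc_coeff_single (v w : Fin 2 → ℤ) (c : ℤ) :
    (single v c : AddMonoidAlgebra ℤ (Fin 2 → ℤ)).coeff w = if v = w then c else 0 :=
  Finsupp.single_apply

lemma hc_vandermonde (i : ℕ) : ∑ a ∈ range (i+1), (i.choose a)^2 = (2*i).choose i := by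
  rw [two_mul, Nat.add_choose_eq, Finset.Nat.sum_antidiagonal_eq_sum_range_succ_mk]
  refine Finset.sum_congr rfl fun a ha => ?_
  rw [sq, Nat.choose_symm (Nat.lt_succ_iff.mp (mem_range.mp ha))]

lemma hc_expand (v1 v2 : Fin 2 → ℤ) (k : ℕ) :
    (single v1 1 + single v2 1 + single 0 1 : AddMonoidAlgebra ℤ (Fin 2 → ℤ))^k
    = ∑ i ∈ range (k+1), ∑ a ∈ range (i+1),
        single (a • v1 + (i-a) • v2) ((k.choose i : ℤ) * (i.choose a : ℤ)) := by
  rw [show (single 0 1 : AddMonoidAlgebra ℤ (Fin 2 → ℤ)) = 1 from rfl, add_pow]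
  refine Finset.sum_congr rfl fun i hi => ?_
  rw [one_pow, mul_one, add_pow, Finset.sum_mul]
  refine Finset.sum_congr rfl fun a ha => ?_
  rw [single_pow, single_pow, one_pow, one_pow, single_mul_single, one_mul,
    AddMonoidAlgebra.natCast_def, AddMonoidAlgebra.natCast_def,
    single_mul_single, single_mul_single, add_zero, add_zero, one_mul, mul_comm]

lemma hc_vec_cond (a b a' b' : ℕ) :
    (a • (![1,0] : Fin 2 → ℤ) + b • ![0,1] + (a' • ![-1,0] + b' • ![0,-1]) = 0)
      ↔ (a = a' ∧ b = b') := by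
  constructor
  · intro h
    have h0 := congrFun h 0
    have h1 := congrFun h 1
    simp [nsmul_eq_mul] at h0 h1
    omega
  · rintro ⟨rfl, rfl⟩
    funext j
    fin_cases j <;> simp [nsmul_eq_mul]

/-- The honeycomb Laurent polynomial `W(u₁,u₂) = (u₁ + u₂ + 1)(u₁⁻¹ + u₂⁻¹ + 1)`, as an
element of the group algebra `ℤ[ℤ²]` (Laurent polynomials in two variables over `ℤ`). -/
noncomputable def Whoneycomb : AddMonoidAlgebra ℤ (Fin 2 → ℤ) :=
  (AddMonoidAlgebra.single (![1, 0] : Fin 2 → ℤ) 1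
    + AddMonoidAlgebra.single (![0, 1] : Fin 2 → ℤ) 1
    + AddMonoidAlgebra.single (0 : Fin 2 → ℤ) 1) *
  (AddMonoidAlgebra.single (![-1, 0] : Fin 2 → ℤ) 1
    + AddMonoidAlgebra.single (![0, -1] : Fin 2 → ℤ) 1
    + AddMonoidAlgebra.single (0 : Fin 2 → ℤ) 1)

/-- Honeycomb example: the constant term of `W^k = ((u₁+u₂+1)(u₁⁻¹+u₂⁻¹+1))^k` equals
`∑_{j=0}^k binom(k,j)² binom(2j,j)`. -/
theorem honeycomb_moments (k : ℕ) :
    (Whoneycomb ^ k).coeff 0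
      = ∑ j ∈ Finset.range (k + 1),
          (k.choose j : ℤ) ^ 2 * ((2 * j).choose j : ℤ) := by
  rw [Whoneycomb, mul_pow, hc_expand, hc_expand]
  simp only [Finset.sum_mul, Finset.mul_sum, single_mul_single]
  simp only [hc_coeff_sum, hc_coeff_single]
  have key : ∀ i ∈ range (k+1), ∀ a ∈ range (i+1),
      (∑ i' ∈ range (k+1), ∑ a' ∈ range (i'+1),
        if (a' • (![1,0] : Fin 2 → ℤ) + (i'-a') • ![0,1]
            + (a • ![-1,0] + (i-a) • ![0,-1]) = 0)
        then ((k.choose i' : ℤ) * (i'.choose a')) * ((k.choose i : ℤ) * (i.choose a)) else 0)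
      = ((k.choose i : ℤ) * (i.choose a))^2 := by
    intro i hi a ha
    have hai : a ≤ i := Nat.lt_succ_iff.mp (mem_range.mp ha)
    rw [Finset.sum_eq_single_of_mem i hi]
    · rw [Finset.sum_eq_single_of_mem a ha]
      · rw [if_pos ((hc_vec_cond _ _ _ _).mpr ⟨rfl, rfl⟩), sq]
      · intro a' _ hne
        rw [if_neg]
        intro hcond
        exact hne ((hc_vec_cond _ _ _ _).mp hcond).1
    · intro i' hi2 hne
      refine Finset.sum_eq_zero fun a' ha2 => ?_
      rw [if_neg]
      intro hcond
      obtain ⟨h1, h2⟩ := (hc_vec_cond _ _ _ _).mp hcond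
      have : a' ≤ i' := Nat.lt_succ_iff.mp (mem_range.mp ha2)
      omega
  calc (∑ i ∈ range (k+1), ∑ a ∈ range (i+1),
        ∑ i' ∈ range (k+1), ∑ a' ∈ range (i'+1),
        if (a' • (![1,0] : Fin 2 → ℤ) + (i'-a') • ![0,1]
            + (a • ![-1,0] + (i-a) • ![0,-1]) = 0)
        then ((k.choose i' : ℤ) * (i'.choose a')) * ((k.choose i : ℤ) * (i.choose a)) else 0)
      = ∑ i ∈ range (k+1), ∑ a ∈ range (i+1), ((k.choose i : ℤ) * (i.choose a))^2 :=
        Finset.sum_congr rfl fun i hi => Finset.sum_congr rfl fun a ha => key i hi a ha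
    _ = ∑ j ∈ range (k+1), (k.choose j : ℤ)^2 * ((2*j).choose j : ℤ) := by
        refine Finset.sum_congr rfl fun i _ => ?_
        rw [← hc_vandermonde i]
        push_cast
        rw [Finset.mul_sum]
        refine Finset.sum_congr rfl fun a _ => ?_
        ring
end
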